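/- arXiv:2502.19369 — 2 statements merged into one kernel-verified Lean document; each statement's English description precedes it below -/
import Mathlib

section
/- The output matrix A_out of the ConMat algorithm satisfies: (R1) the map sending each homogeneous column index j to its pivot low(j) is a bijection from homogeneous column indices to targetable column indices; (R2) no column is both homogeneous and targetable; (R3) if A_out[i,j] = 1 for some i ≤ low(j), then no homogeneous column s < j has pivot i. -/
namespace CM

variable {n : ℕ} {P : Type*} [DecidableEq P]

/-- `i` is the pivot row (lowest `1`) of column `j` in `A`. -/
def IsLow (A : Matrix (Fin n) (Fin n) (ZMod 2)) (j i : Fin n) : Prop :=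
  A i j ≠ 0 ∧ ∀ k, A k j ≠ 0 → k ≤ i

instance (A : Matrix (Fin n) (Fin n) (ZMod 2)) (j i : Fin n) : Decidable (IsLow A j i) := by
  unfold IsLow; infer_instance

/-- Column `j` is homogeneous: its pivot row lies in the same Morse set
(as measured by `morse`) as `j`. -/
def Homog (A : Matrix (Fin n) (Fin n) (ZMod 2)) (morse : Fin n → P) (j : Fin n) : Prop :=
  ∃ i, IsLow A j i ∧ morse i = morse j

instance (A : Matrix (Fin n) (Fin n) (ZMod 2)) (morse : Fin n → P) (j : Fin n) :
    Decidable (Homog A morse j) := by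
  unfold Homog; infer_instance

/-- Row/column `i` is targetable: it is the pivot row of some homogeneous column. -/
def Targetable (A : Matrix (Fin n) (Fin n) (ZMod 2)) (morse : Fin n → P) (i : Fin n) : Prop :=
  ∃ j, Homog A morse j ∧ IsLow A j i

/-- Add column `s` to column `j` (over `ℤ/2`). -/
def addCol (A : Matrix (Fin n) (Fin n) (ZMod 2)) (s j : Fin n) :
    Matrix (Fin n) (Fin n) (ZMod 2) :=
  fun i k => if k = j then A i j + A i s else A i k

/-- Homogeneous columns `s < j` with pivot `i`, candidates for addition to column `j`. -/
def candidates (A : Matrix (Fin n) (Fin n) (ZMod 2)) (morse : Fin n → P) (j i : Fin n) :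
    Finset (Fin n) :=
  Finset.univ.filter fun s => s < j ∧ Homog A morse s ∧ IsLow A s i

/-- One inner step of ConMat: if `A[i,j] = 1` and some homogeneous column `s < j`
has pivot `i`, add such a column (the leftmost one) to column `j`. -/
def stepIJ (morse : Fin n → P) (A : Matrix (Fin n) (Fin n) (ZMod 2)) (j i : Fin n) :
    Matrix (Fin n) (Fin n) (ZMod 2) :=
  if h : A i j ≠ 0 ∧ (candidates A morse j i).Nonempty then
    addCol A ((candidates A morse j i).min' h.2) j
  else A

/-- Exhaustively reduce column `j`, scanning rows from the bottom up. -/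
def reduceCol (morse : Fin n → P) (A : Matrix (Fin n) (Fin n) (ZMod 2)) (j : Fin n) :
    Matrix (Fin n) (Fin n) (ZMod 2) :=
  ((List.finRange n).reverse).foldl (fun B i => stepIJ morse B j i) A

/-- The ConMat algorithm: homogeneity-restricted exhaustive left-to-right column
reduction. -/
def conMat (morse : Fin n → P) (A : Matrix (Fin n) (Fin n) (ZMod 2)) :
    Matrix (Fin n) (Fin n) (ZMod 2) :=
  (List.finRange n).foldl (fun B j => reduceCol morse B j) A

/-- All columns `s < j` with pivot `i` (no homogeneity restriction). -/
def candidatesC (A : Matrix (Fin n) (Fin n) (ZMod 2)) (j i : Fin n) : Finset (Fin n) :=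
  Finset.univ.filter fun s => s < j ∧ IsLow A s i

/-- One inner step of the complete (unrestricted) reduction. -/
def stepIJC (A : Matrix (Fin n) (Fin n) (ZMod 2)) (j i : Fin n) :
    Matrix (Fin n) (Fin n) (ZMod 2) :=
  if h : A i j ≠ 0 ∧ (candidatesC A j i).Nonempty then
    addCol A ((candidatesC A j i).min' h.2) j
  else A

/-- Complete (unrestricted) left-to-right column reduction; afterwards every
nonzero column has a pivot distinct from those of all other columns. -/
def completeReduce (A : Matrix (Fin n) (Fin n) (ZMod 2)) :
    Matrix (Fin n) (Fin n) (ZMod 2) :=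
  (List.finRange n).foldl
    (fun B j => ((List.finRange n).reverse).foldl (fun C i => stepIJC C j i) B) A

end CM

namespace CM

section Aux

variable {n : ℕ} {P : Type*} [DecidableEq P]

lemma zmod2_eq_one : ∀ {x : ZMod 2}, x ≠ 0 → x = 1 := by decide

lemma isLow_unique {A : Matrix (Fin n) (Fin n) (ZMod 2)} {s a b : Fin n}
    (h1 : IsLow A s a) (h2 : IsLow A s b) : a = b :=
  le_antisymm (h2.2 a h1.1) (h1.2 b h2.1)

lemma isLow_congr {A B : Matrix (Fin n) (Fin n) (ZMod 2)} {s : Fin n}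
    (h : ∀ i, A i s = B i s) (i : Fin n) : IsLow A s i ↔ IsLow B s i := by
  unfold IsLow; simp only [h]

lemma homog_congr {A B : Matrix (Fin n) (Fin n) (ZMod 2)} {morse : Fin n → P} {s : Fin n}
    (h : ∀ i, A i s = B i s) : Homog A morse s ↔ Homog B morse s := by
  unfold Homog; simp only [isLow_congr h]

lemma candidates_congr {A B : Matrix (Fin n) (Fin n) (ZMod 2)} {morse : Fin n → P} {j i : Fin n}
    (h : ∀ i' s, s < j → A i' s = B i' s) :
    candidates A morse j i = candidates B morse j i := by
  ext s
  simp only [candidates, Finset.mem_filter, Finset.mem_univ, true_and]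
  constructor
  · rintro ⟨hs, hh, hl⟩
    exact ⟨hs, (homog_congr (fun i' => h i' s hs)).1 hh, (isLow_congr (fun i' => h i' s hs) i).1 hl⟩
  · rintro ⟨hs, hh, hl⟩
    exact ⟨hs, (homog_congr (fun i' => h i' s hs)).2 hh, (isLow_congr (fun i' => h i' s hs) i).2 hl⟩

lemma addCol_ne {A : Matrix (Fin n) (Fin n) (ZMod 2)} {s j : Fin n} {i k : Fin n} (h : k ≠ j) :
    addCol A s j i k = A i k := by
  simp [addCol, h]

lemma stepIJ_ne {morse : Fin n → P} {A : Matrix (Fin n) (Fin n) (ZMod 2)} {j i : Fin n}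
    {i' k : Fin n} (h : k ≠ j) : stepIJ morse A j i i' k = A i' k := by
  unfold stepIJ
  split_ifs with hc
  · exact addCol_ne h
  · rfl

lemma reduceCol_ne {morse : Fin n → P} {A : Matrix (Fin n) (Fin n) (ZMod 2)} {j : Fin n}
    {i k : Fin n} (h : k ≠ j) : reduceCol morse A j i k = A i k := by
  unfold reduceCol
  induction (List.finRange n).reverse generalizing A with
  | nil => rfl
  | cons a l ih =>
      simp only [List.foldl_cons]
      rw [ih, stepIJ_ne h]

lemma stepIJ_rows_above {morse : Fin n → P} {A : Matrix (Fin n) (Fin n) (ZMod 2)} {j i k : Fin n}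
    (hk : i < k) : stepIJ morse A j i k j = A k j := by
  unfold stepIJ
  split_ifs with hc
  · have hmem := (candidates A morse j i).min'_mem hc.2
    simp only [candidates, Finset.mem_filter, Finset.mem_univ, true_and] at hmem
    have hzero : A k ((candidates A morse j i).min' hc.2) = 0 := by
      by_contra hne
      exact absurd (hmem.2.2.2 k hne) (not_le.mpr hk)
    simp [addCol, hzero]
  · rfl

lemma stepIJ_clears {morse : Fin n → P} {A : Matrix (Fin n) (Fin n) (ZMod 2)} {j i : Fin n}
    (h : stepIJ morse A j i i j ≠ 0) : candidates (stepIJ morse A j i) morse j i = ∅ := by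
  unfold stepIJ at h ⊢
  split_ifs at h ⊢ with hc
  · exfalso
    have hmem := (candidates A morse j i).min'_mem hc.2
    simp only [candidates, Finset.mem_filter, Finset.mem_univ, true_and] at hmem
    have h1 : A i j = 1 := zmod2_eq_one hc.1
    have h2 : A i ((candidates A morse j i).min' hc.2) = 1 := zmod2_eq_one hmem.2.2.1
    apply h
    simp only [addCol, if_pos rfl, h1, h2]
    decide
  · exact Finset.not_nonempty_iff_eq_empty.mp (fun hne => hc ⟨h, hne⟩)

lemma foldl_clears (morse : Fin n → P) (j : Fin n) :
    ∀ (L : List (Fin n)) (A : Matrix (Fin n) (Fin n) (ZMod 2)),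
      L.Pairwise (· > ·) →
      (∀ k : Fin n, k ∉ L → ∀ x ∈ L, x < k) →
      (∀ k : Fin n, k ∉ L → A k j ≠ 0 → candidates A morse j k = ∅) →
      ∀ k, (L.foldl (fun B i => stepIJ morse B j i) A) k j ≠ 0 →
        candidates (L.foldl (fun B i => stepIJ morse B j i) A) morse j k = ∅ := by
  intro L
  induction L with
  | nil => intro A _ _ hInv k hk; exact hInv k (by simp) hk
  | cons a L ih =>
      intro A hsort hcompl hInv k hk
      rw [List.pairwise_cons] at hsort
      simp only [List.foldl_cons] at hk ⊢
      refine ih (stepIJ morse A j a) hsort.2 ?_ ?_ k hk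
      · intro k hk' x hx
        by_cases hka : k = a
        · subst hka; exact hsort.1 x hx
        · exact hcompl k (by simp [hka, hk']) x (List.mem_cons_of_mem _ hx)
      · intro k hkL hknz
        by_cases hka : k = a
        · subst hka; exact stepIJ_clears hknz
        · have hkmem : k ∉ a :: L := by simp [hka, hkL]
          have hak : a < k := hcompl k hkmem a (List.mem_cons_self (a := a) (l := L))
          rw [stepIJ_rows_above hak] at hknz
          rw [candidates_congr (fun i' s hs => stepIJ_ne (ne_of_lt hs))]
          exact hInv k hkmem hknz

lemma reduceCol_clears (morse : Fin n → P) (A : Matrix (Fin n) (Fin n) (ZMod 2)) (j : Fin n) :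
    ∀ k, reduceCol morse A j k j ≠ 0 → candidates (reduceCol morse A j) morse j k = ∅ := by
  have hsort : ((List.finRange n).reverse).Pairwise (· > ·) := by
    rw [List.pairwise_reverse]
    exact List.pairwise_lt_finRange n
  exact foldl_clears morse j _ A hsort
    (fun k hk => absurd (by simp [List.mem_reverse, List.mem_finRange]) hk)
    (fun k hk => absurd (by simp [List.mem_reverse, List.mem_finRange]) hk)

lemma conMat_foldl_clears (morse : Fin n → P) :
    ∀ (L : List (Fin n)) (A : Matrix (Fin n) (Fin n) (ZMod 2)),
      L.Pairwise (· < ·) →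
      (∀ j : Fin n, j ∉ L → ∀ x ∈ L, j < x) →
      (∀ j : Fin n, j ∉ L → ∀ i, A i j ≠ 0 → candidates A morse j i = ∅) →
      ∀ j i, (L.foldl (fun B j => reduceCol morse B j) A) i j ≠ 0 →
        candidates (L.foldl (fun B j => reduceCol morse B j) A) morse j i = ∅ := by
  intro L
  induction L with
  | nil => intro A _ _ hInv j i h; exact hInv j (by simp) i h
  | cons a L ih =>
      intro A hsort hcompl hInv j i h
      rw [List.pairwise_cons] at hsort
      simp only [List.foldl_cons] at h ⊢
      refine ih (reduceCol morse A a) hsort.2 ?_ ?_ j i h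
      · intro k hk' x hx
        by_cases hka : k = a
        · subst hka; exact hsort.1 x hx
        · exact hcompl k (by simp [hka, hk']) x (List.mem_cons_of_mem _ hx)
      · intro k hkL i' hknz
        by_cases hka : k = a
        · subst hka; exact reduceCol_clears morse A k i' hknz
        · have hkmem : k ∉ a :: L := by simp [hka, hkL]
          have hak : k < a := hcompl k hkmem a (List.mem_cons_self (a := a) (l := L))
          rw [reduceCol_ne hka] at hknz
          rw [candidates_congr (fun i'' s hs => reduceCol_ne (ne_of_lt (hs.trans hak)))]
          exact hInv k hkmem i' hknz

lemma conMat_clears (morse : Fin n → P) (A : Matrix (Fin n) (Fin n) (ZMod 2)) :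
    ∀ j i, conMat morse A i j ≠ 0 → candidates (conMat morse A) morse j i = ∅ :=
  conMat_foldl_clears morse _ A (List.pairwise_lt_finRange n)
    (fun j hj => absurd (List.mem_finRange j) hj)
    (fun j hj => absurd (List.mem_finRange j) hj)

end Aux

section Aux2

variable {n : ℕ} {P : Type*} [DecidableEq P]

/-- Upper unitriangular matrix predicate. -/
def UUT (V : Matrix (Fin n) (Fin n) (ZMod 2)) : Prop :=
  (∀ i, V i i = 1) ∧ (∀ i j : Fin n, j < i → V i j = 0)

lemma UUT_one : UUT (1 : Matrix (Fin n) (Fin n) (ZMod 2)) :=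
  ⟨fun i => Matrix.one_apply_eq i, fun i j h => Matrix.one_apply_ne (ne_of_gt h)⟩

lemma UUT_mul {V W : Matrix (Fin n) (Fin n) (ZMod 2)} (hV : UUT V) (hW : UUT W) : UUT (V * W) := by
  constructor
  · intro i
    rw [Matrix.mul_apply]
    rw [Finset.sum_eq_single i]
    · rw [hV.1, hW.1, one_mul]
    · intro k _ hk
      rcases lt_or_gt_of_ne hk with h | h
      · rw [hV.2 i k h, zero_mul]
      · rw [hW.2 k i h, mul_zero]
    · intro h; exact absurd (Finset.mem_univ i) h
  · intro i j hij
    rw [Matrix.mul_apply]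
    apply Finset.sum_eq_zero
    intro k _
    rcases lt_or_ge k i with h | h
    · rw [hV.2 i k h, zero_mul]
    · rw [hW.2 k j (lt_of_lt_of_le hij h), mul_zero]

lemma addCol_eq_mul (A : Matrix (Fin n) (Fin n) (ZMod 2)) {s j : Fin n} (h : s ≠ j) :
    addCol A s j = A * (1 + Matrix.single s j 1) := by
  ext i k
  rw [Matrix.mul_add, Matrix.mul_one, Matrix.add_apply]
  by_cases hk : k = j
  · subst hk
    simp [addCol]
  · simp [addCol, hk, Matrix.mul_single_apply_of_ne (i := s) (j := j) (c := (1 : ZMod 2)) i k hk A]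

lemma UUT_elem {s j : Fin n} (h : s < j) :
    UUT (1 + Matrix.single s j (1 : ZMod 2)) := by
  constructor
  · intro i
    rw [Matrix.add_apply, Matrix.one_apply_eq, Matrix.single_apply_of_ne]
    · rw [add_zero]
    · rintro ⟨rfl, rfl⟩; exact absurd h (lt_irrefl _)
  · intro i k hk
    rw [Matrix.add_apply, Matrix.one_apply_ne (ne_of_gt hk), Matrix.single_apply_of_ne]
    · rw [add_zero]
    · rintro ⟨rfl, rfl⟩; exact absurd (h.trans hk) (lt_irrefl _)

lemma stepIJ_factor (morse : Fin n → P) (A : Matrix (Fin n) (Fin n) (ZMod 2)) (j i : Fin n) :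
    ∃ E, UUT E ∧ stepIJ morse A j i = A * E := by
  unfold stepIJ
  split_ifs with hc
  · have hmem := (candidates A morse j i).min'_mem hc.2
    simp only [candidates, Finset.mem_filter, Finset.mem_univ, true_and] at hmem
    exact ⟨_, UUT_elem hmem.1, addCol_eq_mul A (ne_of_lt hmem.1)⟩
  · exact ⟨1, UUT_one, (Matrix.mul_one A).symm⟩

lemma foldl_factor {α : Type*} (f : Matrix (Fin n) (Fin n) (ZMod 2) → α → Matrix (Fin n) (Fin n) (ZMod 2))
    (hf : ∀ A a, ∃ E, UUT E ∧ f A a = A * E) :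
    ∀ (L : List α) (A : Matrix (Fin n) (Fin n) (ZMod 2)),
      ∃ V, UUT V ∧ L.foldl f A = A * V := by
  intro L
  induction L with
  | nil => exact fun A => ⟨1, UUT_one, (Matrix.mul_one A).symm⟩
  | cons a L ih =>
      intro A
      obtain ⟨E, hE, hfa⟩ := hf A a
      obtain ⟨V, hV, hL⟩ := ih (f A a)
      exact ⟨E * V, UUT_mul hE hV, by rw [List.foldl_cons, hL, hfa, Matrix.mul_assoc]⟩

lemma conMat_factor (morse : Fin n → P) (A : Matrix (Fin n) (Fin n) (ZMod 2)) :
    ∃ V, UUT V ∧ conMat morse A = A * V := by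
  apply foldl_factor
  intro B j
  apply foldl_factor
  intro C i
  exact stepIJ_factor morse C j i

end Aux2

section Aux3

variable {n : ℕ}

open scoped Matrix

lemma UUT.blockTri {V : Matrix (Fin n) (Fin n) (ZMod 2)} (hV : UUT V) :
    V.BlockTriangular id := fun i j h => hV.2 i j h

lemma UUT.det_one {V : Matrix (Fin n) (Fin n) (ZMod 2)} (hV : UUT V) : V.det = 1 := by
  rw [Matrix.det_of_upperTriangular hV.blockTri]
  simp [hV.1]

lemma exists_w {A V R : Matrix (Fin n) (Fin n) (ZMod 2)} (hV : UUT V)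
    (hAA : A * A = 0) (hR : R = A * V) {j' j : Fin n} (hlow : IsLow R j' j) :
    ∃ w : Fin n → ZMod 2, (∀ i, ∑ k, R i k * w k = 0) ∧ w j = 1 ∧ ∀ k, j < k → w k = 0 := by
  have hdet : IsUnit V.det := by rw [hV.det_one]; exact isUnit_one
  haveI : Invertible V := V.invertibleOfIsUnitDet hdet
  have hinvtri : ∀ i l : Fin n, l < i → V⁻¹ i l = 0 :=
    fun i l h => Matrix.blockTriangular_inv_of_blockTriangular hV.blockTri h
  have hinvdiag : ∀ i : Fin n, V⁻¹ i i = 1 := by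
    intro i
    have h1 : (V⁻¹ * V) i i = 1 := by rw [Matrix.nonsing_inv_mul V hdet, Matrix.one_apply_eq]
    rw [Matrix.mul_apply, Finset.sum_eq_single i] at h1
    · rwa [hV.1, mul_one] at h1
    · intro k _ hk
      rcases lt_or_gt_of_ne hk with h | h
      · rw [hinvtri i k h, zero_mul]
      · rw [hV.2 k i h, mul_zero]
    · intro h; exact absurd (Finset.mem_univ i) h
  set v : Fin n → ZMod 2 := fun l => R l j' with hv
  have hvhigh : ∀ l, j < l → v l = 0 := by
    intro l hl
    by_contra hne
    exact absurd (hlow.2 l hne) (not_le.mpr hl)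
  refine ⟨V⁻¹ *ᵥ v, ?_, ?_, ?_⟩
  · intro i
    have h2 : R *ᵥ (V⁻¹ *ᵥ v) = A *ᵥ v := by
      rw [Matrix.mulVec_mulVec, hR, Matrix.mul_nonsing_inv_cancel_right V A hdet]
    have h3 : A *ᵥ v = 0 := by
      funext i'
      have h4 : A * (A * V) = 0 := by rw [← Matrix.mul_assoc, hAA, Matrix.zero_mul]
      have : (A *ᵥ v) i' = (A * (A * V)) i' j' := by
        simp only [Matrix.mulVec, dotProduct, Matrix.mul_apply, hv, hR]
      rw [this, h4]
      rfl
    have h5 : (R *ᵥ (V⁻¹ *ᵥ v)) i = ∑ k, R i k * (V⁻¹ *ᵥ v) k := by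
      simp only [Matrix.mulVec, dotProduct]
    rw [← h5, h2, h3]
    rfl
  · have : (V⁻¹ *ᵥ v) j = ∑ l, V⁻¹ j l * v l := by
      simp only [Matrix.mulVec, dotProduct]
    rw [this, Finset.sum_eq_single j]
    · rw [hinvdiag, one_mul, hv]
      exact zmod2_eq_one hlow.1
    · intro l _ hl
      rcases lt_or_gt_of_ne hl with h | h
      · rw [hinvtri j l h, zero_mul]
      · rw [hvhigh l h, mul_zero]
    · intro h; exact absurd (Finset.mem_univ j) h
  · intro k hk
    have : (V⁻¹ *ᵥ v) k = ∑ l, V⁻¹ k l * v l := by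
      simp only [Matrix.mulVec, dotProduct]
    rw [this]
    apply Finset.sum_eq_zero
    intro l _
    rcases lt_or_ge l k with h | h
    · rw [hinvtri k l h, zero_mul]
    · rw [hvhigh l (lt_of_lt_of_le hk h), mul_zero]

end Aux3


/-- The output matrix `A_out = conMat morse A` of the ConMat algorithm, run on a
strictly upper triangular boundary matrix (`A * A = 0`) whose index order is
compatible with the Morse-set blocks, satisfies:
(R1) `j ↦ low(j)` is a bijection from homogeneous columns to targetable columns;
(R2) no column is both homogeneous and targetable;
(R3) if `A_out[i,j] = 1` (for `i ≤ low(j)`, which is automatic), then no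
homogeneous column `s < j` has pivot `i`. -/
theorem stmt_13 {n m : ℕ} (morse : Fin n → Fin m) (hmono : Monotone morse)
    (A : Matrix (Fin n) (Fin n) (ZMod 2))
    (hupper : ∀ i j, A i j ≠ 0 → i < j)
    (hboundary : A * A = 0) :
    -- (R1) : `low` is well defined on homogeneous columns, injective, and onto
    -- the targetable columns
    ((∀ j, Homog (conMat morse A) morse j →
        ∃ i, IsLow (conMat morse A) j i ∧ Targetable (conMat morse A) morse i) ∧
      (∀ j j' i, Homog (conMat morse A) morse j → Homog (conMat morse A) morse j' →
        IsLow (conMat morse A) j i → IsLow (conMat morse A) j' i → j = j') ∧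
      (∀ i, Targetable (conMat morse A) morse i →
        ∃ j, Homog (conMat morse A) morse j ∧ IsLow (conMat morse A) j i)) ∧
    -- (R2)
    (∀ j, ¬ (Homog (conMat morse A) morse j ∧ Targetable (conMat morse A) morse j)) ∧
    -- (R3)
    (∀ i j s, (conMat morse A) i j ≠ 0 → s < j →
        Homog (conMat morse A) morse s → ¬ IsLow (conMat morse A) s i) := by
  set C := conMat morse A with hCdef
  obtain ⟨V, hV, hCV⟩ := conMat_factor morse A
  -- R3
  have hR3 : ∀ i j s, C i j ≠ 0 → s < j → Homog C morse s → ¬ IsLow C s i := by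
    intro i j s hC hs hhom hlow
    have hempty := conMat_clears morse A j i hC
    have hmem : s ∈ candidates C morse j i := by
      simp only [candidates, Finset.mem_filter, Finset.mem_univ, true_and]
      exact ⟨hs, hhom, hlow⟩
    rw [hCdef] at hmem
    rw [hempty] at hmem
    exact absurd hmem (Finset.notMem_empty s)
  -- strict upper triangularity of C
  have hupperC : ∀ i j, C i j ≠ 0 → i < j := by
    intro i j h
    rw [hCdef, hCV, Matrix.mul_apply] at h
    obtain ⟨k, -, hk⟩ := Finset.exists_ne_zero_of_sum_ne_zero h
    have h1 : A i k ≠ 0 := fun hz => hk (by rw [hz, zero_mul])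
    have h2 : V k j ≠ 0 := fun hz => hk (by rw [hz, mul_zero])
    have hkj : k ≤ j := not_lt.mp (fun hlt => h2 (hV.2 k j hlt))
    exact lt_of_lt_of_le (hupper i k h1) hkj
  -- injectivity
  have hinj : ∀ j j' i, Homog C morse j → Homog C morse j' →
      IsLow C j i → IsLow C j' i → j = j' := by
    intro j j' i hh hh' hl hl'
    rcases lt_trichotomy j j' with h | h | h
    · exact absurd hl (hR3 i j' j hl'.1 h hh)
    · exact h
    · exact absurd hl' (hR3 i j j' hl.1 h hh')
  refine ⟨⟨?_, hinj, ?_⟩, ?_, hR3⟩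
  · rintro j ⟨i, hl, hm⟩
    exact ⟨i, hl, j, ⟨i, hl, hm⟩, hl⟩
  · rintro i ⟨j, hh, hl⟩
    exact ⟨j, hh, hl⟩
  -- R2
  rintro j ⟨⟨i₀, hli₀, hmi₀⟩, ⟨j', hhj', hlj'⟩⟩
  -- morse j = morse j'
  obtain ⟨i₁, hli₁, hmi₁⟩ := hhj'
  have hi₁ : i₁ = j := isLow_unique hli₁ hlj'
  have hmjj' : morse j = morse j' := hi₁ ▸ hmi₁
  have hi₀j : i₀ < j := hupperC i₀ j hli₀.1
  have hjj' : j < j' := hupperC j j' hlj'.1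
  have hblock : ∀ x : Fin n, i₀ ≤ x → x ≤ j' → morse x = morse j' := by
    intro x h1 h2
    refine le_antisymm (hmono h2) ?_
    calc morse j' = morse i₀ := (hmi₀.trans hmjj').symm
      _ ≤ morse x := hmono h1
  obtain ⟨w, hw0, hwj, hwhigh⟩ := exists_w hV hboundary hCV hlj'
  -- extract a first column below j supporting row i₀
  have hk₀ : ∃ k, k < j ∧ w k ≠ 0 ∧ C i₀ k ≠ 0 := by
    by_contra hno
    push_neg at hno
    have hsum : ∑ k, C i₀ k * w k = C i₀ j * w j := by
      apply Finset.sum_eq_single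
      · intro k _ hkj
        rcases lt_or_gt_of_ne hkj with hlt | hgt
        · rcases eq_or_ne (w k) 0 with hw | hw
          · rw [hw, mul_zero]
          · rw [hno k hlt hw, zero_mul]
        · rw [hwhigh k hgt, mul_zero]
      · intro h; exact absurd (Finset.mem_univ _) h
    rw [hw0 i₀, hwj, mul_one] at hsum
    exact hli₀.1 hsum.symm
  obtain ⟨k₀, hk₀j, hwk₀, hCk₀⟩ := hk₀
  -- the maximal supported row
  classical
  set Tset : Finset (Fin n) :=
    Finset.univ.filter (fun r => i₀ ≤ r ∧ ∃ k, k < j ∧ w k ≠ 0 ∧ C r k ≠ 0) with hT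
  have hTne : Tset.Nonempty := ⟨i₀, by
    simp only [hT, Finset.mem_filter, Finset.mem_univ, true_and]
    exact ⟨le_refl i₀, k₀, hk₀j, hwk₀, hCk₀⟩⟩
  set istar := Tset.max' hTne with histar
  have histarmem := Tset.max'_mem hTne
  simp only [hT, Finset.mem_filter, Finset.mem_univ, true_and] at histarmem
  obtain ⟨hi₀star, kstar, hksj, hwks, hCks⟩ := histarmem
  have hmax : ∀ r : Fin n, (∃ k, k < j ∧ w k ≠ 0 ∧ C r k ≠ 0) → r ≤ istar := by
    intro r hex
    rcases le_or_gt r istar with h | h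
    · exact h
    · refine Tset.le_max' r ?_
      simp only [hT, Finset.mem_filter, Finset.mem_univ, true_and]
      exact ⟨le_of_lt (lt_of_le_of_lt hi₀star h), hex⟩
  have hpiv : ∀ k, k < j → w k ≠ 0 → C istar k ≠ 0 → IsLow C k istar := by
    intro k hkj hwk hCk
    refine ⟨hCk, ?_⟩
    intro r hr
    exact hmax r ⟨k, hkj, hwk, hr⟩
  have hhomk : ∀ k, k < j → w k ≠ 0 → C istar k ≠ 0 → Homog C morse k := by
    intro k hkj hwk hCk
    refine ⟨istar, hpiv k hkj hwk hCk, ?_⟩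
    have h1 : istar < k := hupperC istar k hCk
    have h2 : morse istar = morse j' :=
      hblock istar hi₀star (le_of_lt (lt_trans (lt_trans h1 hkj) hjj'))
    have h3 : morse k = morse j' :=
      hblock k (le_of_lt (lt_of_le_of_lt hi₀star h1)) (le_of_lt (lt_trans hkj hjj'))
    rw [h2, h3]
  have hCzero : C istar j = 0 := by
    by_contra hne
    exact hR3 istar j kstar hne hksj (hhomk kstar hksj hwks hCks) (hpiv kstar hksj hwks hCks)
  have hsum : ∑ k, C istar k * w k = C istar kstar * w kstar := by
    apply Finset.sum_eq_single
    · intro k _ hk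
      rcases eq_or_ne (w k) 0 with hwk | hwk
      · rw [hwk, mul_zero]
      rcases eq_or_ne (C istar k) 0 with hCk | hCk
      · rw [hCk, zero_mul]
      have hkj : k < j := by
        rcases lt_trichotomy k j with h | h | h
        · exact h
        · exact absurd (h ▸ hCzero) hCk
        · exact absurd (hwhigh k h) hwk
      exact absurd (hinj k kstar istar (hhomk k hkj hwk hCk) (hhomk kstar hksj hwks hCks)
        (hpiv k hkj hwk hCk) (hpiv kstar hksj hwks hCks)) hk
    · intro h; exact absurd (Finset.mem_univ _) h
  rw [hw0 istar] at hsum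
  exact mul_ne_zero hCks hwks hsum.symm


end CM
end

section
/- If two P-filtered input boundary matrices A and A' are Morse fixed (the orderings of simplices within each Morse set agree, though the interleaving across Morse sets may differ via different linear extensions of P), then the connection matrices S and S' output by ConMat agree up to the induced correspondence of indices: S[i,j] = S'[i',j'] whenever i =_σ i' and j =_σ j'. Consequently there is a permutation matrix R with RᵀSR = S'. -/
namespace CM

/-- The boundary matrix `∂` of the simplicial complex, reindexed by an ordering
`e` of the simplices: `A[i,j] = ∂[e i, e j]`. -/
def reindex {n : ℕ} (D : Matrix (Fin n) (Fin n) (ZMod 2)) (e : Fin n ≃ Fin n) :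
    Matrix (Fin n) (Fin n) (ZMod 2) :=
  fun i j => D (e i) (e j)

/-- Index `i` is retained in the connection matrix: neither homogeneous nor
targetable in the reduced matrix. -/
def Retained {n : ℕ} {P : Type*} [DecidableEq P] (B : Matrix (Fin n) (Fin n) (ZMod 2))
    (morse : Fin n → P) (i : Fin n) : Prop :=
  ¬ Homog B morse i ∧ ¬ Targetable B morse i

section Dev

variable {n : ℕ} {P : Type*} [DecidableEq P]

/-- Shorthand for the matrix type. -/
abbrev Mat (n : ℕ) := Matrix (Fin n) (Fin n) (ZMod 2)

lemma reindex_apply (A : Mat n) (f : Fin n ≃ Fin n) (i j : Fin n) :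
    reindex A f i j = A (f i) (f j) := rfl

lemma reindex_reindex_symm (A : Mat n) (f : Fin n ≃ Fin n) :
    reindex (reindex A f) f.symm = A := by
  funext x y; simp [reindex]

lemma reindex_symm_reindex (A : Mat n) (f : Fin n ≃ Fin n) :
    reindex (reindex A f.symm) f = A := by
  funext x y; simp [reindex]

lemma reindex_foldl {α : Type*} (g : Mat n → α → Mat n) (l : List α) (A : Mat n)
    (f : Fin n ≃ Fin n) :
    reindex (l.foldl g A) f.symm =
      l.foldl (fun B j => reindex (g (reindex B f) j) f.symm) (reindex A f.symm) := by
  induction l generalizing A with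
  | nil => rfl
  | cons h t ih =>
      rw [List.foldl_cons, List.foldl_cons, ih]
      congr 1
      rw [reindex_symm_reindex]

/-- Add (simplex-indexed) column `s` to column `a`. -/
def sAddCol (B : Mat n) (s a : Fin n) : Mat n :=
  fun x y => if y = a then B x a + B x s else B x y

/-- Candidate columns (in `f`-coordinates) for the step at column `a`, row `b`
(simplex labels). -/
def SCand (m : Fin n → P) (f : Fin n ≃ Fin n) (B : Mat n) (a b : Fin n) : Finset (Fin n) :=
  candidates (reindex B f) (m ∘ f) (f.symm a) (f.symm b)

/-- The decision of one step: the simplex whose column is added to column `a`, if any. -/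
def dec (m : Fin n → P) (f : Fin n ≃ Fin n) (B : Mat n) (a b : Fin n) : Option (Fin n) :=
  if h : B b a ≠ 0 ∧ (SCand m f B a b).Nonempty then
    some (f ((SCand m f B a b).min' h.2)) else none

/-- One step of the reduction in simplex coordinates. -/
def rowOp (m : Fin n → P) (f : Fin n ≃ Fin n) (a : Fin n) (B : Mat n) (b : Fin n) : Mat n :=
  reindex (stepIJ (m ∘ f) (reindex B f) (f.symm a) (f.symm b)) f.symm

/-- Reduction of column `a` in simplex coordinates. -/
def colOp (m : Fin n → P) (f : Fin n ≃ Fin n) (B : Mat n) (a : Fin n) : Mat n :=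
  (((List.finRange n).reverse).map f).foldl (rowOp m f a) B

/-- The whole algorithm in simplex coordinates. -/
def runS (m : Fin n → P) (f : Fin n ≃ Fin n) (D : Mat n) : Mat n :=
  ((List.finRange n).map f).foldl (colOp m f) D

lemma colOp_eq (m : Fin n → P) (f : Fin n ≃ Fin n) (B : Mat n) (j : Fin n) :
    colOp m f B (f j) = reindex (reduceCol (m ∘ f) (reindex B f) j) f.symm := by
  unfold colOp reduceCol
  rw [reindex_foldl, reindex_reindex_symm, List.foldl_map]
  congr 1
  funext C i
  unfold rowOp
  rw [Equiv.symm_apply_apply, Equiv.symm_apply_apply]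

lemma runS_eq (m : Fin n → P) (f : Fin n ≃ Fin n) (D : Mat n) :
    runS m f D = reindex (conMat (m ∘ f) (reindex D f)) f.symm := by
  unfold runS conMat
  rw [reindex_foldl, reindex_reindex_symm, List.foldl_map]
  congr 1
  funext B j
  rw [colOp_eq]

lemma conMat_eq_runS (m : Fin n → P) (f : Fin n ≃ Fin n) (D : Mat n) :
    conMat (m ∘ f) (reindex D f) = reindex (runS m f D) f := by
  rw [runS_eq, reindex_symm_reindex]

end Dev
section Dev2

variable {n : ℕ} {P : Type*} [DecidableEq P]

lemma rowOp_spec (m : Fin n → P) (f : Fin n ≃ Fin n) (a : Fin n) (B : Mat n) (b : Fin n) :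
    rowOp m f a B b = (dec m f B a b).elim B (fun s => sAddCol B s a) := by
  have hA : reindex B f (f.symm b) (f.symm a) = B b a := by simp [reindex]
  unfold rowOp stepIJ dec
  by_cases h : B b a ≠ 0 ∧ (SCand m f B a b).Nonempty
  · have h1 : reindex B f (f.symm b) (f.symm a) ≠ 0 ∧
        (candidates (reindex B f) (m ∘ f) (f.symm a) (f.symm b)).Nonempty := by
      rw [hA]; exact h
    rw [dif_pos h1, dif_pos h]
    funext x y
    simp only [Option.elim, reindex, addCol, sAddCol, SCand]
    by_cases hy : y = a
    · subst hy
      rw [if_pos (by simp), if_pos rfl]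
      simp
    · rw [if_neg (by simpa using hy), if_neg hy]
      simp
  · have h1 : ¬ (reindex B f (f.symm b) (f.symm a) ≠ 0 ∧
        (candidates (reindex B f) (m ∘ f) (f.symm a) (f.symm b)).Nonempty) := by
      rw [hA]; exact h
    rw [dif_neg h1, dif_neg h, reindex_reindex_symm]
    rfl

lemma dec_eq_none (m : Fin n → P) (f : Fin n ≃ Fin n) (B : Mat n) (a b : Fin n)
    (h : ¬ (B b a ≠ 0 ∧ (SCand m f B a b).Nonempty)) : dec m f B a b = none := dif_neg h

lemma dec_eq_some (m : Fin n → P) (f : Fin n ≃ Fin n) (B : Mat n) (a b : Fin n)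
    (h1 : B b a ≠ 0) (h2 : (SCand m f B a b).Nonempty) :
    dec m f B a b = some (f ((SCand m f B a b).min' h2)) := dif_pos ⟨h1, h2⟩

lemma dec_some_elim {m : Fin n → P} {f : Fin n ≃ Fin n} {B : Mat n} {a b s : Fin n}
    (h : dec m f B a b = some s) :
    B b a ≠ 0 ∧ f.symm s ∈ SCand m f B a b ∧ ∀ t ∈ SCand m f B a b, f.symm s ≤ t := by
  unfold dec at h
  split_ifs at h with h0
  · obtain ⟨hba, hne⟩ := h0
    have hs : s = f ((SCand m f B a b).min' hne) := (Option.some_injective _ h).symm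
    refine ⟨hba, ?_, ?_⟩
    · rw [hs, Equiv.symm_apply_apply]; exact Finset.min'_mem _ _
    · intro t ht; rw [hs, Equiv.symm_apply_apply]; exact Finset.min'_le _ _ ht

lemma mem_SCand_iff' (m : Fin n → P) (f : Fin n ≃ Fin n) (B : Mat n) (a b s₀ : Fin n) :
    s₀ ∈ SCand m f B a b ↔ s₀ < f.symm a ∧ Homog (reindex B f) (m ∘ f) s₀ ∧
      IsLow (reindex B f) s₀ (f.symm b) := by
  simp [SCand, candidates]

lemma isLow_unique_s15 {A : Mat n} {j i i' : Fin n} (h : IsLow A j i) (h' : IsLow A j i') :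
    i = i' := le_antisymm (h'.2 i h.1) (h.2 i' h'.1)

/-- Basic consequences of candidate membership (no order hypotheses needed). -/
lemma SCand_elim {m : Fin n → P} {f : Fin n ≃ Fin n} {B : Mat n} {a b s₀ : Fin n}
    (h : s₀ ∈ SCand m f B a b) :
    m (f s₀) = m b ∧ B b (f s₀) ≠ 0 ∧ (∀ k, B k (f s₀) ≠ 0 → f.symm k ≤ f.symm b) ∧
      s₀ < f.symm a := by
  rw [mem_SCand_iff'] at h
  obtain ⟨hlt, ⟨i₀, hi₀, hm⟩, hlow⟩ := h
  have : i₀ = f.symm b := isLow_unique_s15 hi₀ hlow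
  subst this
  refine ⟨?_, ?_, ?_, hlt⟩
  · simpa [Function.comp] using hm.symm
  · simpa [reindex] using hlow.1
  · intro k hk
    have := hlow.2 (f.symm k) (by simpa [reindex] using hk)
    exact this
  
lemma rowOp_apply_ne (m : Fin n → P) (f : Fin n ≃ Fin n) (a : Fin n) (B : Mat n)
    (b x y : Fin n) (hy : y ≠ a) : rowOp m f a B b x y = B x y := by
  rw [rowOp_spec]
  cases dec m f B a b with
  | none => rfl
  | some s => simp [Option.elim, sAddCol, hy]

lemma colOp_apply_ne (m : Fin n → P) (f : Fin n ≃ Fin n) (B : Mat n)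
    (a x y : Fin n) (hy : y ≠ a) : colOp m f B a x y = B x y := by
  unfold colOp
  generalize ((List.finRange n).reverse).map f = l
  induction l generalizing B with
  | nil => rfl
  | cons h t ih => rw [List.foldl_cons, ih, rowOp_apply_ne m f a B h x y hy]

end Dev2
section Dev3
set_option linter.unusedSectionVars false

variable {n : ℕ} {P : Type*} [DecidableEq P]

/-- The invariant: nonzero entries are compatible with both linear extensions. -/
def Inv (m : Fin n → P) (lle lle' : P → P → Prop) (B : Mat n) : Prop :=
  ∀ a b, B a b ≠ 0 → lle (m a) (m b) ∧ lle' (m a) (m b)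

/-- Order-free (within-block referenced) form of `Homog ∧ IsLow`. -/
def SQ (m : Fin n → P) (f : Fin n ≃ Fin n) (B : Mat n) (s b : Fin n) : Prop :=
  B b s ≠ 0 ∧ m b = m s ∧ ∀ k, B k s ≠ 0 → m k = m s → f.symm k ≤ f.symm b

def Pos (m : Fin n → P) (f : Fin n ≃ Fin n) (s a : Fin n) : Prop :=
  m s = m a → f.symm s < f.symm a

lemma SQ_iff_of_wb {m : Fin n → P} {f g : Fin n ≃ Fin n} {B : Mat n} {s b : Fin n}
    (wb : ∀ x y, m x = m y → (f.symm x ≤ f.symm y ↔ g.symm x ≤ g.symm y)) :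
    SQ m f B s b ↔ SQ m g B s b := by
  unfold SQ
  constructor
  · rintro ⟨h1, h2, h3⟩
    exact ⟨h1, h2, fun k hk hm => (wb k b (hm.trans h2.symm)).mp (h3 k hk hm)⟩
  · rintro ⟨h1, h2, h3⟩
    exact ⟨h1, h2, fun k hk hm => (wb k b (hm.trans h2.symm)).mpr (h3 k hk hm)⟩

lemma Pos_iff_of_wb {m : Fin n → P} {f g : Fin n ≃ Fin n} {s a : Fin n}
    (wb : ∀ x y, m x = m y → (f.symm x ≤ f.symm y ↔ g.symm x ≤ g.symm y)) :
    Pos m f s a ↔ Pos m g s a := by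
  unfold Pos
  constructor
  · intro h hm
    have := h hm
    rw [lt_iff_not_ge] at this ⊢
    exact fun hc => this ((wb a s hm.symm).mpr hc)
  · intro h hm
    have := h hm
    rw [lt_iff_not_ge] at this ⊢
    exact fun hc => this ((wb a s hm.symm).mp hc)

section Char

variable {m : Fin n → P} {L : P → P → Prop} {f : Fin n ≃ Fin n} {B : Mat n}
variable (hlinf : IsLinearOrder P L)
variable (hadm : ∀ i j : Fin n, i ≤ j → L (m (f i)) (m (f j)))
variable (hInvf : ∀ x y, B x y ≠ 0 → L (m x) (m y))

include hlinf hadm hInvf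

lemma homog_isLow_char (j b : Fin n) :
    (Homog (reindex B f) (m ∘ f) j ∧ IsLow (reindex B f) j (f.symm b)) ↔
      SQ m f B (f j) b := by
  have hanti : ∀ p q, L p q → L q p → p = q := fun p q h1 h2 =>
    hlinf.toIsPartialOrder.toAntisymm.antisymm p q h1 h2
  constructor
  · rintro ⟨⟨i₀, hi₀, hm⟩, hlow⟩
    have hi : i₀ = f.symm b := isLow_unique_s15 hi₀ hlow
    subst hi
    refine ⟨by simpa [reindex] using hlow.1, by simpa [Function.comp] using hm, ?_⟩
    intro k hk _
    have := hlow.2 (f.symm k) (by simpa [reindex] using hk)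
    exact this
  · rintro ⟨h1, h2, h3⟩
    have hlow : IsLow (reindex B f) j (f.symm b) := by
      refine ⟨by simpa [reindex] using h1, ?_⟩
      intro k' hk'
      have hk : B (f k') (f j) ≠ 0 := by simpa [reindex] using hk'
      by_cases hmk : m (f k') = m (f j)
      · have := h3 (f k') hk hmk
        simpa using this
      · by_contra hlt
        push_neg at hlt
        have h4 : L (m b) (m (f k')) := by
          have := hadm (f.symm b) k' (le_of_lt hlt)
          simpa using this
        have h5 : L (m (f k')) (m (f j)) := hInvf _ _ hk
        rw [← h2] at h5
        exact hmk (by rw [hanti _ _ h5 h4, h2])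
    refine ⟨⟨f.symm b, hlow, ?_⟩, hlow⟩
    simp only [Function.comp]
    rw [Equiv.apply_symm_apply]
    exact h2

lemma mem_SCand_char {a b : Fin n} (hba : B b a ≠ 0) (s : Fin n) :
    f.symm s ∈ SCand m f B a b ↔ SQ m f B s b ∧ Pos m f s a := by
  have hanti : ∀ p q, L p q → L q p → p = q := fun p q h1 h2 =>
    hlinf.toIsPartialOrder.toAntisymm.antisymm p q h1 h2
  rw [mem_SCand_iff']
  have hc := homog_isLow_char hlinf hadm hInvf (f.symm s) b
  rw [Equiv.apply_symm_apply] at hc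
  constructor
  · rintro ⟨hlt, hrest⟩
    exact ⟨hc.mp hrest, fun _ => hlt⟩
  · rintro ⟨hsq, hpos⟩
    refine ⟨?_, hc.mpr hsq⟩
    by_cases hm : m s = m a
    · exact hpos hm
    · by_contra hle
      push_neg at hle
      have h4 : L (m a) (m s) := by
        have := hadm (f.symm a) (f.symm s) hle
        simpa using this
      have h5 : L (m s) (m a) := by
        have h6 : L (m b) (m a) := hInvf b a hba
        rwa [hsq.2.1] at h6
      exact hm (hanti _ _ h5 h4)

end Char

end Dev3
section Dev4
set_option linter.unusedSectionVars false

variable {n : ℕ} {P : Type*} [DecidableEq P]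

lemma homog_ext {A A' : Mat n} {mo : Fin n → P} {j : Fin n} (h : ∀ k, A k j = A' k j) :
    Homog A mo j ↔ Homog A' mo j := by
  unfold Homog IsLow; simp only [h]

lemma isLow_ext {A A' : Mat n} {j i : Fin n} (h : ∀ k, A k j = A' k j) :
    IsLow A j i ↔ IsLow A' j i := by
  unfold IsLow; simp only [h]

lemma mem_SCand_congr {m : Fin n → P} (f : Fin n ≃ Fin n) {B B' : Mat n} {a b : Fin n}
    (s₀ : Fin n) (hcol : ∀ x, B x (f s₀) = B' x (f s₀)) :
    (s₀ ∈ SCand m f B a b ↔ s₀ ∈ SCand m f B' a b) := by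
  have hcolR : ∀ k, reindex B f k s₀ = reindex B' f k s₀ := fun k => hcol (f k)
  rw [mem_SCand_iff', mem_SCand_iff', homog_ext hcolR, isLow_ext hcolR]

lemma SCand_congr_offcol {m : Fin n → P} (f : Fin n ≃ Fin n) {B B' : Mat n} {a b : Fin n}
    (hag : ∀ x y, y ≠ a → B x y = B' x y) :
    SCand m f B a b = SCand m f B' a b := by
  ext s₀
  by_cases hs : s₀ = f.symm a
  · subst hs
    rw [mem_SCand_iff', mem_SCand_iff']
    simp [lt_irrefl]
  · exact mem_SCand_congr f s₀ (fun x => hag x (f s₀) (by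
      intro hc; exact hs (by rw [← hc, Equiv.symm_apply_apply])))

lemma min'_congr {S T : Finset (Fin n)} (h : S = T) (hS : S.Nonempty) (hT : T.Nonempty) :
    S.min' hS = T.min' hT := by
  apply le_antisymm
  · exact Finset.min'_le _ _ (by rw [h]; exact Finset.min'_mem _ _)
  · exact Finset.min'_le _ _ (by rw [← h]; exact Finset.min'_mem _ _)

lemma dec_congr {m : Fin n → P} (f : Fin n ≃ Fin n) {B B' : Mat n} {a b : Fin n}
    (hba : B b a = B' b a) (hcand : SCand m f B a b = SCand m f B' a b) :
    dec m f B a b = dec m f B' a b := by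
  unfold dec
  by_cases h1 : B b a ≠ 0 ∧ (SCand m f B a b).Nonempty
  · have h2 : B' b a ≠ 0 ∧ (SCand m f B' a b).Nonempty :=
      ⟨by rw [← hba]; exact h1.1, by rw [← hcand]; exact h1.2⟩
    rw [dif_pos h1, dif_pos h2]
    rw [min'_congr hcand h1.2 h2.2]
  · have h2 : ¬ (B' b a ≠ 0 ∧ (SCand m f B' a b).Nonempty) := by
      rw [← hba, ← hcand]; exact h1
    rw [dif_neg h1, dif_neg h2]

section WithOrders

variable {m : Fin n → P} {lle lle' : P → P → Prop} {e e' : Fin n ≃ Fin n}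
variable (hlin : IsLinearOrder P lle) (hlin' : IsLinearOrder P lle')
variable (hadm : ∀ i j : Fin n, i ≤ j → lle (m (e i)) (m (e j)))
variable (hadm' : ∀ i j : Fin n, i ≤ j → lle' (m (e' i)) (m (e' j)))
variable (hmf : ∀ a b : Fin n, m a = m b → (e.symm a ≤ e.symm b ↔ e'.symm a ≤ e'.symm b))

include hlin hlin' in
/-- Preservation of the invariant by a row step. -/
lemma rowOp_inv (f : Fin n ≃ Fin n) {B : Mat n} (hB : Inv m lle lle' B) (a b : Fin n) :
    Inv m lle lle' (rowOp m f a B b) := by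
  have htr : ∀ p q r, lle p q → lle q r → lle p r := fun p q r h1 h2 =>
    hlin.toIsPartialOrder.toIsPreorder.toIsTrans.trans p q r h1 h2
  have htr' : ∀ p q r, lle' p q → lle' q r → lle' p r := fun p q r h1 h2 =>
    hlin'.toIsPartialOrder.toIsPreorder.toIsTrans.trans p q r h1 h2
  rw [rowOp_spec]
  cases hd : dec m f B a b with
  | none => exact hB
  | some s =>
      obtain ⟨hba, hmem, -⟩ := dec_some_elim hd
      obtain ⟨hms, -, -, -⟩ := SCand_elim hmem
      rw [Equiv.apply_symm_apply] at hms
      intro x y hxy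
      by_cases hy : y = a
      · replace hxy : B x a + B x s ≠ 0 := by
          rw [hy] at hxy
          simpa [sAddCol] using hxy
        rw [hy]
        by_cases hxa : B x a ≠ 0
        · exact hB x a hxa
        · push_neg at hxa
          have hxs : B x s ≠ 0 := by
            intro h0; rw [hxa, h0, add_zero] at hxy; exact hxy rfl
          have hx := hB x s hxs
          have hb := hB b a hba
          rw [hms] at hx
          exact ⟨htr _ _ _ hx.1 hb.1, htr' _ _ _ hx.2 hb.2⟩
      · replace hxy : B x y ≠ 0 := by simpa [sAddCol, hy] using hxy
        exact hB x y hxy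

/-- A column from a block not below the target column's block is never a candidate. -/
lemma not_mem_SCand {B : Mat n} (hB : Inv m lle lle' B) {a b c : Fin n}
    (hba : B b a ≠ 0) (hc : ¬ lle (m c) (m a) ∨ ¬ lle' (m c) (m a)) (f : Fin n ≃ Fin n) :
    f.symm c ∉ SCand m f B a b := by
  intro hmem
  obtain ⟨hm, -, -, -⟩ := SCand_elim hmem
  rw [Equiv.apply_symm_apply] at hm
  have hb := hB b a hba
  rcases hc with h | h
  · exact h (by rw [hm]; exact hb.1)
  · exact h (by rw [hm]; exact hb.2)

lemma rowOp_congr_offcol (f : Fin n ≃ Fin n) {B B' : Mat n} {a b c : Fin n} (hca : c ≠ a)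
    (hag : ∀ x y, y ≠ c → B x y = B' x y)
    (hcB : B b a ≠ 0 → f.symm c ∉ SCand m f B a b)
    (hcB' : B' b a ≠ 0 → f.symm c ∉ SCand m f B' a b) :
    ∀ x y, y ≠ c → rowOp m f a B b x y = rowOp m f a B' b x y := by
  intro x y hyc
  have hba : B b a = B' b a := hag b a hca.symm
  by_cases h0 : B b a = 0
  · have hd : dec m f B a b = none := dec_eq_none _ _ _ _ _ (by simp [h0])
    have hd' : dec m f B' a b = none := dec_eq_none _ _ _ _ _ (by simp [← hba, h0])
    rw [rowOp_spec, rowOp_spec, hd, hd']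
    exact hag x y hyc
  · have hcand : SCand m f B a b = SCand m f B' a b := by
      ext s₀
      by_cases hs : s₀ = f.symm c
      · subst hs
        simp only [hcB h0, hcB' (by rw [← hba]; exact h0)]
      · exact mem_SCand_congr f s₀ (fun x' => hag x' (f s₀) (by
          intro hc'; exact hs (by rw [← hc', Equiv.symm_apply_apply])))
    have hdec := dec_congr f hba hcand
    rw [rowOp_spec, rowOp_spec, hdec]
    cases hd' : dec m f B' a b with
    | none => exact hag x y hyc
    | some s =>
        obtain ⟨hba', hmem', -⟩ := dec_some_elim hd'
        have hsc : s ≠ c := by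
          intro h; subst h
          exact hcB' hba' hmem'
        simp only [Option.elim, sAddCol]
        by_cases hy : y = a
        · rw [if_pos hy, if_pos hy, hag x a hca.symm, hag x s hsc]
        · rw [if_neg hy, if_neg hy]
          exact hag x y hyc

/-- Row steps in incomparable blocks commute. -/
lemma rowOp_comm (f : Fin n ≃ Fin n) {B : Mat n} (hB : Inv m lle lle' B) {a b₁ b₂ : Fin n}
    (h1 : ¬ lle (m b₁) (m b₂)) (h2 : ¬ lle' (m b₂) (m b₁)) :
    rowOp m f a (rowOp m f a B b₁) b₂ = rowOp m f a (rowOp m f a B b₂) b₁ := by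
  -- key claims about candidate columns
  have key : ∀ s : Fin n, dec m f B a b₁ = some s → B b₂ s = 0 := by
    intro s hd
    obtain ⟨-, hmem, -⟩ := dec_some_elim hd
    obtain ⟨hms, -, -, -⟩ := SCand_elim hmem
    rw [Equiv.apply_symm_apply] at hms
    by_contra hne
    exact h2 (by rw [← hms]; exact (hB b₂ s hne).2)
  have key' : ∀ s : Fin n, dec m f B a b₂ = some s → B b₁ s = 0 := by
    intro s hd
    obtain ⟨-, hmem, -⟩ := dec_some_elim hd
    obtain ⟨hms, -, -, -⟩ := SCand_elim hmem
    rw [Equiv.apply_symm_apply] at hms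
    by_contra hne
    exact h1 (by rw [← hms]; exact (hB b₁ s hne).1)
  have hsa : ∀ (b s : Fin n), dec m f B a b = some s → s ≠ a := by
    intro b s hd
    obtain ⟨-, hmem, -⟩ := dec_some_elim hd
    obtain ⟨-, -, -, hlt⟩ := SCand_elim hmem
    intro h; subst h
    exact absurd hlt (lt_irrefl _)
  have stab : ∀ (b₁' b₂' : Fin n), (∀ s, dec m f B a b₁' = some s → B b₂' s = 0) →
      dec m f (rowOp m f a B b₁') a b₂' = dec m f B a b₂' := by
    intro c₁ c₂ hkey
    rw [rowOp_spec]
    cases hd : dec m f B a c₁ with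
    | none => rfl
    | some s =>
        apply dec_congr
        · show sAddCol B s a c₂ a = B c₂ a
          simp [sAddCol, hkey s hd]
        · apply SCand_congr_offcol
          intro x y hy
          show sAddCol B s a x y = B x y
          simp [sAddCol, hy]
  rw [rowOp_spec m f a (rowOp m f a B b₁) b₂, rowOp_spec m f a (rowOp m f a B b₂) b₁,
    stab b₁ b₂ key, stab b₂ b₁ key']
  cases hd₁ : dec m f B a b₁ with
  | none =>
      cases hd₂ : dec m f B a b₂ with
      | none =>
          simp only [rowOp_spec m f a B b₁, rowOp_spec m f a B b₂, hd₁, hd₂,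
            Option.elim_some, Option.elim_none]
      | some s₂ =>
          simp only [rowOp_spec m f a B b₁, rowOp_spec m f a B b₂, hd₁, hd₂,
            Option.elim_some, Option.elim_none]
  | some s₁ =>
      cases hd₂ : dec m f B a b₂ with
      | none =>
          simp only [rowOp_spec m f a B b₁, rowOp_spec m f a B b₂, hd₁, hd₂,
            Option.elim_some, Option.elim_none]
      | some s₂ =>
          simp only [rowOp_spec m f a B b₁, rowOp_spec m f a B b₂, hd₁, hd₂,
            Option.elim_some, Option.elim_none]
          funext x y
          by_cases hy : y = a
          · subst hy
            simp [sAddCol, hsa b₁ s₁ hd₁, hsa b₂ s₂ hd₂]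
            ring
          · simp [sAddCol, hy]

end WithOrders

end Dev4
section Dev5
set_option linter.unusedSectionVars false

variable {n : ℕ} {P : Type*} [DecidableEq P]

lemma foldl_congr_on {σ α : Type*} (I : σ → Prop) (op op' : σ → α → σ)
    (hpres : ∀ s a, I s → I (op s a))
    (heq : ∀ s a, I s → op s a = op' s a) :
    ∀ (l : List α) (s : σ), I s → l.foldl op s = l.foldl op' s := by
  intro l
  induction l with
  | nil => intro s _; rfl
  | cons h t ih =>
      intro s hs
      rw [List.foldl_cons, List.foldl_cons, ← heq s h hs, ih _ (hpres s h hs)]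

lemma foldl_inv {σ α : Type*} (I : σ → Prop) (op : σ → α → σ)
    (hpres : ∀ s a, I s → I (op s a)) :
    ∀ (l : List α) (s : σ), I s → I (l.foldl op s) := by
  intro l
  induction l with
  | nil => intro s hs; exact hs
  | cons h t ih => intro s hs; exact ih _ (hpres s h hs)

lemma foldl_perm {σ α : Type*} (I : σ → Prop) (op : σ → α → σ)
    (hpres : ∀ s a, I s → I (op s a)) :
    ∀ (l₂ l₁ : List α), l₁.Perm l₂ → l₁.Nodup →
      (∀ a b, [a,b].Sublist l₁ → [b,a].Sublist l₂ →
        ∀ s, I s → op (op s a) b = op (op s b) a) →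
      ∀ s, I s → l₁.foldl op s = l₂.foldl op s := by
  intro l₂
  induction l₂ with
  | nil =>
      intro l₁ hp _ _ s _
      rw [hp.eq_nil]
  | cons h t ih =>
      intro l₁ hp hnd hcomm s hs
      have hh : h ∈ l₁ := hp.mem_iff.mpr (List.mem_cons_self (a := h) (l := t))
      obtain ⟨u, v, rfl⟩ := List.append_of_mem hh
      have hnotu : h ∉ u := fun hu =>
        (List.disjoint_of_nodup_append hnd) hu List.mem_cons_self
      have hcomm' : ∀ x ∈ u, ∀ s, I s → op (op s x) h = op (op s h) x := by
        intro x hx s hs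
        apply hcomm x h
        · have h1 : List.Sublist [x] u := List.singleton_sublist.mpr hx
          have h2 : List.Sublist [h] (h :: v) := List.singleton_sublist.mpr List.mem_cons_self
          simpa using List.Sublist.append h1 h2
        · have hxh : x ≠ h := fun hxe => hnotu (hxe ▸ hx)
          have hxl₂ : x ∈ h :: t := hp.mem_iff.mp (List.mem_append_left _ hx)
          have hxt : x ∈ t := by
            rcases List.mem_cons.mp hxl₂ with h' | h'
            · exact absurd h' hxh
            · exact h'
          exact (List.singleton_sublist.mpr hxt).cons₂ h
        · exact hs
      have hmove : ∀ (u' : List α) (s : σ), I s →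
          (∀ x ∈ u', ∀ s, I s → op (op s x) h = op (op s h) x) →
          (u' ++ h :: v).foldl op s = (u' ++ v).foldl op (op s h) := by
        intro u'
        induction u' with
        | nil => intro s _ _; rfl
        | cons x u'' ihu =>
            intro s hs hcx
            simp only [List.cons_append, List.foldl_cons]
            rw [ihu (op s x) (hpres s x hs) (fun y hy => hcx y (List.mem_cons_of_mem _ hy)),
              hcx x List.mem_cons_self s hs]
      rw [hmove u s hs hcomm', List.foldl_cons]
      have hsub : List.Sublist (u ++ v) (u ++ h :: v) :=
        List.Sublist.append (List.Sublist.refl u) (List.sublist_cons_self h v)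
      apply ih
      · exact (List.perm_middle.symm.trans hp).cons_inv
      · exact hnd.sublist hsub
      · intro a b s1 s2
        exact hcomm a b (s1.trans hsub) (List.Sublist.cons h s2)
      · exact hpres s h hs

lemma map_finRange_perm (e : Fin n ≃ Fin n) :
    ((List.finRange n).map e).Perm (List.finRange n) := by
  apply List.perm_of_nodup_nodup_toFinset_eq
  · exact (List.nodup_finRange n).map e.injective
  · exact List.nodup_finRange n
  · ext x
    simp only [List.mem_toFinset, List.mem_map, List.mem_finRange, true_iff, iff_true]
    exact ⟨e.symm x, trivial, e.apply_symm_apply x⟩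

lemma maps_perm (e e' : Fin n ≃ Fin n) (l : List (Fin n)) (hl : l.Perm (List.finRange n)) :
    (l.map e).Perm (l.map e') := by
  have h1 : (l.map e).Perm ((List.finRange n).map e) := hl.map e
  have h2 : (l.map e').Perm ((List.finRange n).map e') := hl.map e'
  exact (h1.trans ((map_finRange_perm e).trans (map_finRange_perm e').symm)).trans h2.symm

lemma sublist_pair_map {f : Fin n ≃ Fin n} {x y : Fin n} {l : List (Fin n)}
    (h : [x, y].Sublist (l.map f)) : [f.symm x, f.symm y].Sublist l := by
  have h2 := h.map f.symm
  simpa [List.map_map] using h2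

lemma sublist_pair_lt {f : Fin n ≃ Fin n} {x y : Fin n}
    (h : [x, y].Sublist ((List.finRange n).map f)) : f.symm x < f.symm y := by
  have h2 := sublist_pair_map h
  have hpw := (List.pairwise_lt_finRange n).sublist h2
  rcases List.pairwise_cons.mp hpw with ⟨h3, -⟩
  exact h3 _ List.mem_cons_self

lemma sublist_pair_gt {f : Fin n ≃ Fin n} {x y : Fin n}
    (h : [x, y].Sublist (((List.finRange n).reverse).map f)) : f.symm y < f.symm x := by
  have h2 := sublist_pair_map h
  have hrev : ((List.finRange n).reverse).Pairwise (fun a b : Fin n => b < a) :=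
    List.pairwise_reverse.mpr (by simpa using List.pairwise_lt_finRange n)
  have hpw := hrev.sublist h2
  rcases List.pairwise_cons.mp hpw with ⟨h3, -⟩
  exact h3 _ List.mem_cons_self

end Dev5
section Dev6
set_option linter.unusedSectionVars false

variable {n : ℕ} {P : Type*} [DecidableEq P]
variable {m : Fin n → P} {lle lle' : P → P → Prop} {e e' : Fin n ≃ Fin n}
variable (hlin : IsLinearOrder P lle) (hlin' : IsLinearOrder P lle')
variable (hadm : ∀ i j : Fin n, i ≤ j → lle (m (e i)) (m (e j)))
variable (hadm' : ∀ i j : Fin n, i ≤ j → lle' (m (e' i)) (m (e' j)))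
variable (hmf : ∀ a b : Fin n, m a = m b → (e.symm a ≤ e.symm b ↔ e'.symm a ≤ e'.symm b))

include hlin hlin' hadm hadm' hmf in
lemma rowOp_indep {B : Mat n} (hB : Inv m lle lle' B) (a b : Fin n) :
    rowOp m e a B b = rowOp m e' a B b := by
  have hInv1 : ∀ x y, B x y ≠ 0 → lle (m x) (m y) := fun x y h => (hB x y h).1
  have hInv2 : ∀ x y, B x y ≠ 0 → lle' (m x) (m y) := fun x y h => (hB x y h).2
  rw [rowOp_spec, rowOp_spec]
  suffices hdec : dec m e B a b = dec m e' B a b by rw [hdec]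
  by_cases hba : B b a ≠ 0
  · have hmemiff : ∀ s : Fin n,
        (e.symm s ∈ SCand m e B a b ↔ e'.symm s ∈ SCand m e' B a b) := by
      intro s
      rw [mem_SCand_char hlin hadm hInv1 hba s, mem_SCand_char hlin' hadm' hInv2 hba s,
        SQ_iff_of_wb hmf, Pos_iff_of_wb hmf]
    by_cases hne : (SCand m e B a b).Nonempty
    · have hne' : (SCand m e' B a b).Nonempty := by
        obtain ⟨t₀, ht₀⟩ := hne
        exact ⟨e'.symm (e t₀), (hmemiff (e t₀)).mp (by simpa using ht₀)⟩
      rw [dec_eq_some m e B a b hba hne, dec_eq_some m e' B a b hba hne']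
      congr 1
      set s₁ := e ((SCand m e B a b).min' hne) with hs₁
      set s₂ := e' ((SCand m e' B a b).min' hne') with hs₂
      have hm₁ : e.symm s₁ ∈ SCand m e B a b := by
        rw [hs₁, Equiv.symm_apply_apply]; exact Finset.min'_mem _ _
      have hm₂ : e'.symm s₂ ∈ SCand m e' B a b := by
        rw [hs₂, Equiv.symm_apply_apply]; exact Finset.min'_mem _ _
      have hmin₁ : ∀ t ∈ SCand m e B a b, e.symm s₁ ≤ t := by
        intro t ht; rw [hs₁, Equiv.symm_apply_apply]; exact Finset.min'_le _ _ ht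
      have hmin₂ : ∀ t ∈ SCand m e' B a b, e'.symm s₂ ≤ t := by
        intro t ht; rw [hs₂, Equiv.symm_apply_apply]; exact Finset.min'_le _ _ ht
      have hq₁ := (mem_SCand_char hlin hadm hInv1 hba s₁).mp hm₁
      have hq₂ := (mem_SCand_char hlin' hadm' hInv2 hba s₂).mp hm₂
      obtain ⟨⟨-, hbs₁, -⟩, -⟩ := hq₁
      obtain ⟨⟨-, hbs₂, -⟩, -⟩ := hq₂
      have hmm : m s₁ = m s₂ := hbs₁.symm.trans hbs₂
      have hc₁ : e'.symm s₂ ≤ e'.symm s₁ := hmin₂ _ ((hmemiff s₁).mp hm₁)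
      have hc₂ : e.symm s₁ ≤ e.symm s₂ := hmin₁ _ ((hmemiff s₂).mpr hm₂)
      have hc₃ : e'.symm s₁ ≤ e'.symm s₂ := (hmf s₁ s₂ hmm).mp hc₂
      exact e'.symm.injective (le_antisymm hc₃ hc₁)
    · have hne' : ¬ (SCand m e' B a b).Nonempty := by
        rintro ⟨t₀, ht₀⟩
        exact hne ⟨e.symm (e' t₀), (hmemiff (e' t₀)).mpr (by simpa using ht₀)⟩
      rw [dec_eq_none m e B a b (fun h => hne h.2), dec_eq_none m e' B a b (fun h => hne' h.2)]
  · push_neg at hba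
    rw [dec_eq_none m e B a b (fun h => h.1 hba), dec_eq_none m e' B a b (fun h => h.1 hba)]

include hlin hlin' in
lemma colOp_inv (f : Fin n ≃ Fin n) {B : Mat n} (hB : Inv m lle lle' B) (a : Fin n) :
    Inv m lle lle' (colOp m f B a) :=
  foldl_inv (Inv m lle lle') (rowOp m f a)
    (fun s b hs => rowOp_inv hlin hlin' f hs a b) _ B hB

include hlin hlin' hadm hadm' hmf in
lemma colOp_indep {B : Mat n} (hB : Inv m lle lle' B) (a : Fin n) :
    colOp m e B a = colOp m e' B a := by
  have hanti : ∀ p q, lle p q → lle q p → p = q := fun p q h1 h2 =>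
    hlin.toIsPartialOrder.toAntisymm.antisymm p q h1 h2
  have hanti' : ∀ p q, lle' p q → lle' q p → p = q := fun p q h1 h2 =>
    hlin'.toIsPartialOrder.toAntisymm.antisymm p q h1 h2
  have hpres : ∀ s b, Inv m lle lle' s → Inv m lle lle' (rowOp m e a s b) :=
    fun s b hs => rowOp_inv hlin hlin' e hs a b
  unfold colOp
  have h1 : (((List.finRange n).reverse).map e).foldl (rowOp m e a) B =
      (((List.finRange n).reverse).map e').foldl (rowOp m e a) B := by
    apply foldl_perm (Inv m lle lle') (rowOp m e a) hpres
      (((List.finRange n).reverse).map e') (((List.finRange n).reverse).map e)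
      (maps_perm e e' _ (List.reverse_perm _))
      ((List.nodup_reverse.mpr (List.nodup_finRange n)).map e.injective)
      ?_ B hB
    intro b₁ b₂ s1 s2 s hs
    have hlt1 := sublist_pair_gt s1
    have hlt2 := sublist_pair_gt s2
    have hL1 : lle (m b₂) (m b₁) := by
      have := hadm _ _ (le_of_lt hlt1)
      simpa using this
    have hL2 : lle' (m b₁) (m b₂) := by
      have := hadm' _ _ (le_of_lt hlt2)
      simpa using this
    have hne : m b₁ ≠ m b₂ := by
      intro hmeq
      exact absurd ((hmf b₂ b₁ hmeq.symm).mp (le_of_lt hlt1)) (not_le.mpr hlt2)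
    have hx1 : ¬ lle (m b₁) (m b₂) := fun hc => hne (hanti _ _ hc hL1)
    have hx2 : ¬ lle' (m b₂) (m b₁) := fun hc => hne (hanti' _ _ hL2 hc)
    exact rowOp_comm e hs hx1 hx2
  rw [h1]
  exact foldl_congr_on (Inv m lle lle') (rowOp m e a) (rowOp m e' a) hpres
    (fun s b hs => rowOp_indep hlin hlin' hadm hadm' hmf hs a b) _ B hB

end Dev6
section Dev7
set_option linter.unusedSectionVars false
set_option linter.unusedVariables false

variable {n : ℕ} {P : Type*} [DecidableEq P]
variable {m : Fin n → P} {lle lle' : P → P → Prop} {e e' : Fin n ≃ Fin n}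
variable (hlin : IsLinearOrder P lle) (hlin' : IsLinearOrder P lle')
variable (hadm : ∀ i j : Fin n, i ≤ j → lle (m (e i)) (m (e j)))
variable (hadm' : ∀ i j : Fin n, i ≤ j → lle' (m (e' i)) (m (e' j)))
variable (hmf : ∀ a b : Fin n, m a = m b → (e.symm a ≤ e.symm b ↔ e'.symm a ≤ e'.symm b))

include hlin hlin' in
lemma colOp_agree (f : Fin n ≃ Fin n) {B B' : Mat n} {a c : Fin n} (hca : c ≠ a)
    (hc : ¬ lle (m c) (m a) ∨ ¬ lle' (m c) (m a))
    (hB : Inv m lle lle' B) (hB' : Inv m lle lle' B')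
    (hag : ∀ x y, y ≠ c → B x y = B' x y) :
    ∀ x y, y ≠ c → colOp m f B a x y = colOp m f B' a x y := by
  unfold colOp
  generalize (((List.finRange n).reverse).map f) = l
  induction l generalizing B B' with
  | nil => exact hag
  | cons b t ih =>
      simp only [List.foldl_cons]
      exact ih (rowOp_inv hlin hlin' f hB a b) (rowOp_inv hlin hlin' f hB' a b)
        (rowOp_congr_offcol f hca hag (fun hba => not_mem_SCand hB hba hc f)
          (fun hba => not_mem_SCand hB' hba hc f))

include hlin hlin' in
lemma colOp_comm (f : Fin n ≃ Fin n) {B : Mat n} (hB : Inv m lle lle' B) {a₁ a₂ : Fin n}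
    (h12 : ¬ lle' (m a₁) (m a₂)) (h21 : ¬ lle (m a₂) (m a₁)) (hne : a₁ ≠ a₂) :
    colOp m f (colOp m f B a₁) a₂ = colOp m f (colOp m f B a₂) a₁ := by
  funext x y
  by_cases hy1 : y = a₁
  · rw [hy1, colOp_apply_ne m f (colOp m f B a₁) a₂ x a₁ hne]
    exact (colOp_agree hlin hlin' f (Ne.symm hne) (Or.inl h21)
      (colOp_inv hlin hlin' f hB a₂) hB (colOp_apply_ne m f B a₂) x a₁ hne).symm
  · by_cases hy2 : y = a₂
    · rw [hy2, colOp_apply_ne m f (colOp m f B a₂) a₁ x a₂ (Ne.symm hne)]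
      exact colOp_agree hlin hlin' f hne (Or.inr h12)
        (colOp_inv hlin hlin' f hB a₁) hB (colOp_apply_ne m f B a₁) x a₂ (Ne.symm hne)
    · rw [colOp_apply_ne m f (colOp m f B a₁) a₂ x y hy2,
        colOp_apply_ne m f B a₁ x y hy1,
        colOp_apply_ne m f (colOp m f B a₂) a₁ x y hy1,
        colOp_apply_ne m f B a₂ x y hy2]

include hlin hlin' hadm hadm' hmf in
lemma runS_indep (D : Mat n) (hD : Inv m lle lle' D) : runS m e D = runS m e' D := by
  have hanti : ∀ p q, lle p q → lle q p → p = q := fun p q h1 h2 =>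
    hlin.toIsPartialOrder.toAntisymm.antisymm p q h1 h2
  have hanti' : ∀ p q, lle' p q → lle' q p → p = q := fun p q h1 h2 =>
    hlin'.toIsPartialOrder.toAntisymm.antisymm p q h1 h2
  have hpres : ∀ s a, Inv m lle lle' s → Inv m lle lle' (colOp m e s a) :=
    fun s a hs => colOp_inv hlin hlin' e hs a
  unfold runS
  have h1 : ((List.finRange n).map e).foldl (colOp m e) D =
      ((List.finRange n).map e').foldl (colOp m e) D := by
    apply foldl_perm (Inv m lle lle') (colOp m e) hpres
      ((List.finRange n).map e') ((List.finRange n).map e)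
      (maps_perm e e' _ (List.Perm.refl _))
      ((List.nodup_finRange n).map e.injective) ?_ D hD
    intro a₁ a₂ s1 s2 s hs
    have hlt1 := sublist_pair_lt s1
    have hlt2 := sublist_pair_lt s2
    have hL1 : lle (m a₁) (m a₂) := by
      have := hadm _ _ (le_of_lt hlt1)
      simpa using this
    have hL2 : lle' (m a₂) (m a₁) := by
      have := hadm' _ _ (le_of_lt hlt2)
      simpa using this
    have hneq : m a₁ ≠ m a₂ := by
      intro hmeq
      exact absurd ((hmf a₁ a₂ hmeq).mp (le_of_lt hlt1)) (not_le.mpr hlt2)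
    have hx1 : ¬ lle' (m a₁) (m a₂) := fun hc => hneq (hanti' _ _ hc hL2)
    have hx2 : ¬ lle (m a₂) (m a₁) := fun hc => hneq (hanti _ _ hL1 hc)
    have hne12 : a₁ ≠ a₂ := by
      intro h
      rw [h] at hlt1
      exact lt_irrefl _ hlt1
    exact colOp_comm hlin hlin' e hs hx1 hx2 hne12
  rw [h1]
  exact foldl_congr_on (Inv m lle lle') (colOp m e) (colOp m e') hpres
    (fun s a hs => colOp_indep hlin hlin' hadm hadm' hmf hs a) _ D hD

include hlin hlin' in
lemma runS_inv (f : Fin n ≃ Fin n) (D : Mat n) (hD : Inv m lle lle' D) :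
    Inv m lle lle' (runS m f D) :=
  foldl_inv (Inv m lle lle') (colOp m f)
    (fun s a hs => colOp_inv hlin hlin' f hs a) _ D hD

end Dev7
section Dev8
set_option linter.unusedSectionVars false
set_option linter.unusedVariables false

variable {n : ℕ} {P : Type*} [DecidableEq P]

section FinalChar

variable {m : Fin n → P} {L : P → P → Prop} {f : Fin n ≃ Fin n} {B : Mat n}
variable (hlinf : IsLinearOrder P L)
variable (hadmf : ∀ i j : Fin n, i ≤ j → L (m (f i)) (m (f j)))
variable (hInvf : ∀ x y, B x y ≠ 0 → L (m x) (m y))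

include hlinf hadmf hInvf

lemma homog_char (j : Fin n) :
    Homog (reindex B f) (m ∘ f) j ↔ ∃ k, B k (f j) ≠ 0 ∧ m k = m (f j) := by
  have hanti : ∀ p q, L p q → L q p → p = q := fun p q h1 h2 =>
    hlinf.toIsPartialOrder.toAntisymm.antisymm p q h1 h2
  constructor
  · rintro ⟨i₀, hlow, hm⟩
    exact ⟨f i₀, by simpa [reindex] using hlow.1, by simpa using hm⟩
  · rintro ⟨k, hk, hmk⟩
    classical
    set S := Finset.univ.filter (fun k => B k (f j) ≠ 0 ∧ m k = m (f j)) with hS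
    have hkS : k ∈ S := by simp [hS, hk, hmk]
    have hSne : (S.image f.symm).Nonempty := ⟨f.symm k, Finset.mem_image_of_mem _ hkS⟩
    set i₀ := (S.image f.symm).max' hSne with hi₀
    have hi₀mem := Finset.max'_mem (S.image f.symm) hSne
    rw [← hi₀] at hi₀mem
    obtain ⟨k₀, hk₀S, hk₀⟩ := Finset.mem_image.mp hi₀mem
    have hfk₀ : f i₀ = k₀ := by rw [← hk₀, Equiv.apply_symm_apply]
    have hk₀P : B k₀ (f j) ≠ 0 ∧ m k₀ = m (f j) := by
      simpa [hS] using hk₀S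
    refine ⟨i₀, ⟨?_, ?_⟩, ?_⟩
    · rw [reindex_apply, hfk₀]
      exact hk₀P.1
    · intro k' hk'
      have hk'0 : B (f k') (f j) ≠ 0 := by simpa [reindex] using hk'
      by_cases hmk' : m (f k') = m (f j)
      · have hmem : k' ∈ S.image f.symm :=
          Finset.mem_image.mpr ⟨f k', by simp [hS, hk'0, hmk'], by simp⟩
        exact Finset.le_max' _ _ hmem
      · by_contra hlt
        push_neg at hlt
        have h4 : L (m (f i₀)) (m (f k')) := hadmf _ _ (le_of_lt hlt)
        have h5 : L (m (f k')) (m (f j)) := hInvf _ _ hk'0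
        rw [hfk₀, hk₀P.2] at h4
        exact hmk' (hanti _ _ h5 h4)
    · show m (f i₀) = m (f j)
      rw [hfk₀]
      exact hk₀P.2

lemma targetable_char (i : Fin n) :
    Targetable (reindex B f) (m ∘ f) i ↔ ∃ s, SQ m f B s (f i) := by
  unfold Targetable
  constructor
  · rintro ⟨j, hH, hL⟩
    have hL' : IsLow (reindex B f) j (f.symm (f i)) := by
      rw [Equiv.symm_apply_apply]; exact hL
    exact ⟨f j, (homog_isLow_char hlinf hadmf hInvf j (f i)).mp ⟨hH, hL'⟩⟩
  · rintro ⟨s, hs⟩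
    have hs' : SQ m f B (f (f.symm s)) (f i) := by simpa using hs
    have h := (homog_isLow_char hlinf hadmf hInvf (f.symm s) (f i)).mpr hs'
    exact ⟨f.symm s, h.1, by simpa using h.2⟩

end FinalChar

end Dev8
/-- Morse-fixed invariance of ConMat. Let `∂` be the boundary matrix (`∂ * ∂ = 0`)
of a simplicial complex on simplices `Fin n` with Morse decomposition `morse0`
indexed by a poset `P`, and let `e, e'` be two orderings of the simplices, each
giving a strictly upper triangular matrix filtered along a linear extension of
`P`, which are Morse fixed: within each Morse set the two orderings agree.
Then the connection matrices output by ConMat agree under the induced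
correspondence of indices (`e i = e' i'` means `i =_σ i'`): retained/homogeneous/
targetable statuses correspond and retained entries are equal. Consequently there
is a permutation `g` carrying the connection submatrix `S` to `S'`
(`RᵀSR = S'`). -/
theorem stmt_15 {n : ℕ} {P : Type*} [PartialOrder P] [Fintype P] [DecidableEq P]
    (D : Matrix (Fin n) (Fin n) (ZMod 2)) (hboundary : D * D = 0)
    (morse0 : Fin n → P) (e e' : Fin n ≃ Fin n)
    (hupper : ∀ i j, reindex D e i j ≠ 0 → i < j)
    (hupper' : ∀ i j, reindex D e' i j ≠ 0 → i < j)
    (lle lle' : P → P → Prop)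
    (hlin : IsLinearOrder P lle) (hlin' : IsLinearOrder P lle')
    (hext : ∀ p q : P, p ≤ q → lle p q) (hext' : ∀ p q : P, p ≤ q → lle' p q)
    (hcompat : ∀ i j : Fin n, i ≤ j → lle (morse0 (e i)) (morse0 (e j)))
    (hcompat' : ∀ i j : Fin n, i ≤ j → lle' (morse0 (e' i)) (morse0 (e' j)))
    (hMorseFixed : ∀ a b : Fin n, morse0 a = morse0 b →
      (e.symm a ≤ e.symm b ↔ e'.symm a ≤ e'.symm b)) :
    (∀ i i' : Fin n, e i = e' i' →
      ((Homog (conMat (morse0 ∘ e) (reindex D e)) (morse0 ∘ e) i ↔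
          Homog (conMat (morse0 ∘ e') (reindex D e')) (morse0 ∘ e') i') ∧
        (Targetable (conMat (morse0 ∘ e) (reindex D e)) (morse0 ∘ e) i ↔
          Targetable (conMat (morse0 ∘ e') (reindex D e')) (morse0 ∘ e') i'))) ∧
    (∀ i i' j j' : Fin n, e i = e' i' → e j = e' j' →
      Retained (conMat (morse0 ∘ e) (reindex D e)) (morse0 ∘ e) i →
      Retained (conMat (morse0 ∘ e) (reindex D e)) (morse0 ∘ e) j →
      conMat (morse0 ∘ e) (reindex D e) i j =
        conMat (morse0 ∘ e') (reindex D e')  i' j') ∧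
    (∃ g : Equiv.Perm (Fin n),
      (∀ i : Fin n, Retained (conMat (morse0 ∘ e) (reindex D e)) (morse0 ∘ e) i ↔
        Retained (conMat (morse0 ∘ e') (reindex D e')) (morse0 ∘ e') (g i)) ∧
      ∀ i j : Fin n,
        Retained (conMat (morse0 ∘ e) (reindex D e)) (morse0 ∘ e) i →
        Retained (conMat (morse0 ∘ e) (reindex D e)) (morse0 ∘ e) j →
        conMat (morse0 ∘ e) (reindex D e) i j =
          conMat (morse0 ∘ e') (reindex D e') (g i) (g j)) := by
  have hD : Inv morse0 lle lle' D := by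
    intro a b hab
    constructor
    · have h1 : reindex D e (e.symm a) (e.symm b) ≠ 0 := by
        simpa [reindex] using hab
      have h2 := hupper _ _ h1
      have h3 := hcompat _ _ (le_of_lt h2)
      simpa using h3
    · have h1 : reindex D e' (e'.symm a) (e'.symm b) ≠ 0 := by
        simpa [reindex] using hab
      have h2 := hupper' _ _ h1
      have h3 := hcompat' _ _ (le_of_lt h2)
      simpa using h3
  have hrun : runS morse0 e D = runS morse0 e' D :=
    runS_indep hlin hlin' hcompat hcompat' hMorseFixed D hD
  have hBinv : Inv morse0 lle lle' (runS morse0 e D) := runS_inv hlin hlin' e D hD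
  have hIe : ∀ x y, runS morse0 e D x y ≠ 0 → lle (morse0 x) (morse0 y) :=
    fun x y h => (hBinv x y h).1
  have hIe' : ∀ x y, runS morse0 e D x y ≠ 0 → lle' (morse0 x) (morse0 y) :=
    fun x y h => (hBinv x y h).2
  have hc1 : conMat (morse0 ∘ e) (reindex D e) = reindex (runS morse0 e D) e :=
    conMat_eq_runS morse0 e D
  have hc2 : conMat (morse0 ∘ e') (reindex D e') = reindex (runS morse0 e D) e' := by
    rw [conMat_eq_runS morse0 e' D, ← hrun]
  have hHom : ∀ i i' : Fin n, e i = e' i' →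
      (Homog (reindex (runS morse0 e D) e) (morse0 ∘ e) i ↔
        Homog (reindex (runS morse0 e D) e') (morse0 ∘ e') i') := by
    intro i i' hii
    rw [homog_char hlin hcompat hIe i, homog_char hlin' hcompat' hIe' i', hii]
  have hTar : ∀ i i' : Fin n, e i = e' i' →
      (Targetable (reindex (runS morse0 e D) e) (morse0 ∘ e) i ↔
        Targetable (reindex (runS morse0 e D) e') (morse0 ∘ e') i') := by
    intro i i' hii
    rw [targetable_char hlin hcompat hIe i, targetable_char hlin' hcompat' hIe' i']
    constructor
    · rintro ⟨s, hs⟩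
      refine ⟨s, ?_⟩
      rw [← hii]
      exact (SQ_iff_of_wb hMorseFixed).mp hs
    · rintro ⟨s, hs⟩
      refine ⟨s, ?_⟩
      rw [hii]
      exact (SQ_iff_of_wb hMorseFixed).mpr hs
  refine ⟨?_, ?_, ?_⟩
  · intro i i' hii
    rw [hc1, hc2]
    exact ⟨hHom i i' hii, hTar i i' hii⟩
  · intro i i' j j' hii hjj _ _
    rw [hc1, hc2, reindex_apply, reindex_apply, hii, hjj]
  · refine ⟨e.trans e'.symm, ?_, ?_⟩
    · intro i
      have hgi : e i = e' ((e.trans e'.symm) i) := by simp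
      rw [hc1, hc2]
      unfold Retained
      exact and_congr (not_congr (hHom i _ hgi)) (not_congr (hTar i _ hgi))
    · intro i j _ _
      have hgi : e i = e' ((e.trans e'.symm) i) := by simp
      have hgj : e j = e' ((e.trans e'.symm) j) := by simp
      rw [hc1, hc2, reindex_apply, reindex_apply, hgi, hgj]

end CM
end
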